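/- For each j with 1 ≤ j ≤ N−1 and each m ≥ 0, the (m+1)×(m+1) linear system Σ_{t=0}^{m} ((m−2t)N + j)^{2s−1} a_t = 0, s = 1,…,m, has solution space of dimension exactly 1. -/

import Mathlib

open Matrix


/-- The `m × (m+1)` matrix with entries `((m−2t)N + j)^{2s−1}` (rows `s = 1,…,m`,
columns `t = 0,…,m`) has a one-dimensional kernel, i.e. rank `m`. -/
theorem stmt12 (N m j : ℕ) (hN : 2 ≤ N) (hj1 : 1 ≤ j) (hj2 : j ≤ N - 1) :
    Module.finrank ℚ
      (LinearMap.ker (Matrix.mulVecLin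
        (Matrix.of fun (s : Fin m) (t : Fin (m+1)) =>
          (((((m:ℤ) - 2 * (t:ℕ)) * N + j : ℤ)) : ℚ)^(2*((s:ℕ)+1)-1)))) = 1 := by
  set y : Fin (m+1) → ℤ := fun t => ((m:ℤ) - 2*(t:ℕ))*N + j with hy
  have hN0 : (N:ℤ) ≠ 0 := by positivity
  have hjN : ¬ ((N:ℤ) ∣ (j:ℤ)) := by
    intro h
    have h1 : (0:ℤ) < j := by exact_mod_cast hj1
    have h2 := Int.le_of_dvd h1 h
    omega
  have hy0 : ∀ t, y t ≠ 0 := by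
    intro t h
    exact hjN ⟨2*(t:ℕ) - m, by simp only [hy] at h; linarith⟩
  have hy2 : Function.Injective fun t => (y t)^2 := by
    intro t₁ t₂ h
    simp only at h
    have h' : (y t₁ - y t₂) * (y t₁ + y t₂) = 0 := by linear_combination h
    rcases mul_eq_zero.mp h' with h'' | h''
    · have : ((m:ℤ) - 2*(t₁:ℕ))*N = ((m:ℤ) - 2*(t₂:ℕ))*N := by
        simp only [hy] at h''; linarith
      have := mul_right_cancel₀ hN0 this
      have : (t₁:ℕ) = (t₂:ℕ) := by omega
      exact Fin.ext this
    · exact absurd ⟨(t₁:ℕ) + (t₂:ℕ) - m, by simp only [hy] at h''; linarith⟩ hjN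
  set x : Fin (m+1) → ℚ := fun t => ((y t : ℚ)) with hx
  have hx0 : ∀ t, x t ≠ 0 := fun t h => hy0 t (by exact_mod_cast show ((y t : ℚ)) = 0 from h)
  have hx2 : Function.Injective fun t => (x t)^2 := by
    intro t₁ t₂ h
    apply hy2
    simp only [hx] at h
    exact_mod_cast h
  set A : Matrix (Fin m) (Fin (m+1)) ℚ :=
    Matrix.of fun (s : Fin m) (t : Fin (m+1)) =>
      (((((m:ℤ) - 2 * (t:ℕ)) * N + j : ℤ)) : ℚ)^(2*((s:ℕ)+1)-1) with hA
  set B : Matrix (Fin m) (Fin m) ℚ := A.submatrix id Fin.castSucc with hBdef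
  have hB : B = (Matrix.vandermonde (fun t : Fin m => (x t.castSucc)^2))ᵀ *
      Matrix.diagonal (fun t : Fin m => x t.castSucc) := by
    ext s t
    rw [Matrix.mul_diagonal]
    simp only [hBdef, Matrix.submatrix_apply, id_eq, hA, Matrix.of_apply,
      Matrix.transpose_apply, Matrix.vandermonde_apply, hx, hy]
    rw [show 2*((s:ℕ)+1)-1 = 2*(s:ℕ)+1 from by omega, pow_succ, pow_mul]
  have hdetB : B.det ≠ 0 := by
    rw [hB, Matrix.det_mul, Matrix.det_transpose, Matrix.det_diagonal]
    refine mul_ne_zero (Matrix.det_vandermonde_ne_zero_iff.mpr ?_)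
      (Finset.prod_ne_zero_iff.mpr fun t _ => hx0 _)
    exact fun t₁ t₂ h => Fin.castSucc_injective m (hx2 h)
  have hrankB : B.rank = m := by
    rw [Matrix.rank_of_isUnit B (by
      rw [Matrix.isUnit_iff_isUnit_det]; exact isUnit_iff_ne_zero.mpr hdetB)]
    simp
  have hBle : B.rank ≤ A.rank := by
    have : A * (1 : Matrix (Fin (m+1)) (Fin (m+1)) ℚ).submatrix (Equiv.refl _) Fin.castSucc = B := by
      rw [Matrix.mul_submatrix_one]
      rfl
    calc B.rank = (A * (1 : Matrix (Fin (m+1)) (Fin (m+1)) ℚ).submatrix (Equiv.refl _) Fin.castSucc).rank := by rw [this]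
    _ ≤ A.rank := Matrix.rank_mul_le_left _ _
  have hrankA : A.rank = m := by
    refine le_antisymm ?_ (hrankB.symm.trans_le hBle)
    simpa using A.rank_le_card_height
  have hrn := LinearMap.finrank_range_add_finrank_ker A.mulVecLin
  rw [← Matrix.rank, hrankA, Module.finrank_fintype_fun_eq_card, Fintype.card_fin] at hrn
  omega
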